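/- Let ℓ be a prime and K a discrete valuation field of characteristic zero and residue characteristic ℓ, with maximal ideal m and ramification index e = v(ℓ). Let S be a free O_K-module of finite rank and A an automorphism of S of finite order. If e < ℓ − 1 and A − 1 ∈ m·End(S), then A = 1. -/

import Mathlib

open Finset

lemma aux_dvd_zero {O : Type} [CommRing O] [IsDomain O] [IsDiscreteValuationRing O]
    {π : O} (hπ : Irreducible π) {c : O} (h : ∀ N, π ^ N ∣ c) : c = 0 := by
  by_contra hc
  obtain ⟨n, u, rfl⟩ := IsDiscreteValuationRing.eq_unit_mul_pow_irreducible hc hπ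
  obtain ⟨y, hy⟩ := h (n + 1)
  have hπ0 : π ^ n ≠ 0 := pow_ne_zero _ hπ.ne_zero
  rw [pow_succ, mul_comm (π ^ n) π, mul_assoc] at hy
  have : (u : O) = π * y := mul_left_cancel₀ hπ0 (by linear_combination hy)
  exact hπ.not_isUnit (isUnit_of_mul_isUnit_left (this ▸ u.isUnit))

lemma aux_krull {O : Type} [CommRing O] [IsDomain O] [IsDiscreteValuationRing O]
    {E : Type} [AddCommGroup E] [Module O E] [Module.Free O E]
    {π : O} (hπ : Irreducible π) (x : E) (h : ∀ N, ∃ y, x = π ^ N • y) : x = 0 := by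
  let b := Module.Free.chooseBasis O E
  have : ∀ i, b.repr x i = 0 := by
    intro i
    refine aux_dvd_zero hπ fun N => ?_
    obtain ⟨y, rfl⟩ := h N
    exact ⟨b.repr y i, by simp [smul_eq_mul]⟩
  have : b.repr x = 0 := Finsupp.ext this
  simpa using congrArg b.repr.symm this

/-- Key step: a `p`-th root of unity congruent to 1 mod π is 1. -/
lemma aux_key {O : Type} [CommRing O] [IsDomain O] [IsDiscreteValuationRing O]
    {E : Type} [Ring E] [Algebra O E] [Module.Free O E] [Module.IsTorsionFree O E]
    {π : O} (hπ : Irreducible π)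
    {p d : ℕ} (hp : p.Prime) (w : Oˣ) (hpw : (p : O) = w * π ^ d)
    (hd : d + 1 ≤ p - 1)
    {B : E} (hB : ∃ y, B = π • y) (hpow : (1 + B) ^ p = 1) : B = 0 := by
  by_contra hB0
  -- find the exact π-adic valuation n of B
  have hex : ∃ N, ¬ ∃ y, B = π ^ N • y := by
    by_contra hall
    push_neg at hall
    exact hB0 (aux_krull hπ B hall)
  classical
  set N₀ := Nat.find hex with hN₀
  have hspec : ¬ ∃ y, B = π ^ N₀ • y := Nat.find_spec hex
  have hN₀2 : 2 ≤ N₀ := by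
    rcases hB with ⟨y, hy⟩
    by_contra hlt
    interval_cases N₀
    · exact hspec ⟨B, by simp⟩
    · exact hspec ⟨y, by simpa using hy⟩
  set n := N₀ - 1 with hn
  have hn1 : 1 ≤ n := by omega
  obtain ⟨C, hC⟩ : ∃ y, B = π ^ n • y := by
    have := Nat.find_min hex (show n < N₀ by omega)
    push_neg at this
    exact not_not.mp (by simpa using this)
  have hNn : N₀ = n + 1 := by omega
  have hCnot : ¬ ∃ y, C = π • y := by
    rintro ⟨y, rfl⟩
    exact hspec ⟨y, by rw [hNn, hC, ← mul_smul, ← pow_succ]⟩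
  -- binomial expansion
  obtain ⟨q, rfl⟩ : ∃ q, p = q + 2 := ⟨p - 2, by have := hp.two_le; omega⟩
  have hcomm : Commute B (1 : E) := Commute.one_right B
  have hsum : ∑ m ∈ range (q + 2 + 1), (q + 2).choose m • B ^ m = 1 := by
    have h1 := hcomm.add_pow (q + 2)
    rw [add_comm B 1] at h1
    rw [← hpow, h1]
    refine Finset.sum_congr rfl fun m _ => ?_
    rw [one_pow, mul_one, nsmul_eq_mul, Nat.cast_comm]
  rw [Finset.sum_range_succ'] at hsum
  simp only [pow_zero, Nat.choose_zero_right, one_smul] at hsum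
  have hsum2 : ∑ i ∈ range (q + 2), (q + 2).choose (i + 1) • B ^ (i + 1) = 0 := by
    linear_combination (norm := abel) hsum
  rw [Finset.sum_range_succ'] at hsum2
  simp only [zero_add, pow_one, Nat.choose_one_right] at hsum2
  have heq : (q + 2) • B = -∑ i ∈ range (q + 1), (q + 2).choose (i + 1 + 1) • B ^ (i + 1 + 1) := by
    linear_combination (norm := abel) hsum2
  -- LHS has valuation exactly n + d; RHS has valuation ≥ n + d + 1
  set K := n + d + 1 with hK
  have hmem : ∀ i ∈ range (q + 1), (q + 2).choose (i + 1 + 1) • B ^ (i + 1 + 1) ∈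
      LinearMap.range ((π ^ K) • (LinearMap.id : E →ₗ[O] E)) := by
    intro i hi
    simp only [Finset.mem_range] at hi
    set m := i + 2 with hm
    have hBm : B ^ m = π ^ (n * m) • C ^ m := by
      rw [hC, smul_pow, ← pow_mul]
    have key : ∀ (k : ℕ) (x : E), K ≤ k → (∃ z, x = π ^ k • z) →
        x ∈ LinearMap.range ((π ^ K) • (LinearMap.id : E →ₗ[O] E)) := by
      rintro k x hk ⟨z, rfl⟩
      refine ⟨π ^ (k - K) • z, ?_⟩
      simp only [LinearMap.smul_apply, LinearMap.id_apply, ← mul_smul, ← pow_add]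
      congr 2
      omega
    have h3 : i ≤ n * i := Nat.le_mul_of_pos_left i hn1
    have h1 : n * (i + 2) = n * i + 2 * n := by ring
    rcases eq_or_lt_of_le (show m ≤ q + 2 by omega) with hmq | hmq
    · -- top term: choose = 1, valuation n*m ≥ K
      have hch : (q + 2).choose m = 1 := by rw [hmq]; exact Nat.choose_self _
      rw [hch, one_smul]
      refine key (n * m) _ ?_ ⟨C ^ m, hBm⟩
      rw [hK, hm]
      omega
    · -- middle terms: p ∣ choose
      have hdvd : (q + 2) ∣ (q + 2).choose m := hp.dvd_choose_self (by omega) (by omega)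
      obtain ⟨t, ht⟩ := hdvd
      rw [ht]
      refine key (d + n * m) _ (by rw [hK, hm]; omega) ⟨(t : O) • ((w : O) • C ^ m), ?_⟩
      rw [hBm, ← Nat.cast_smul_eq_nsmul O, Nat.cast_mul, hpw]
      simp only [smul_smul]
      congr 1
      ring
  have hRHS : (q + 2) • B ∈ LinearMap.range ((π ^ K) • (LinearMap.id : E →ₗ[O] E)) := by
    rw [heq]
    exact neg_mem (Submodule.sum_mem _ hmem)
  obtain ⟨y, hy⟩ := hRHS
  simp only [LinearMap.smul_apply, LinearMap.id_apply] at hy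
  -- (q+2) • B = π^(n+d) • (w • C)
  have hLHS : (q + 2) • B = π ^ (n + d) • ((w : O) • C) := by
    rw [← Nat.cast_smul_eq_nsmul O, hpw, hC]
    simp only [smul_smul]
    congr 1
    ring
  rw [hLHS] at hy
  apply hCnot
  have hcancel : (w : O) • C = π • y := by
    have h0 : (π : O) ^ (n + d) ≠ 0 := pow_ne_zero _ hπ.ne_zero
    apply smul_right_injective E h0
    show π ^ (n + d) • ((w : O) • C) = π ^ (n + d) • (π • y)
    rw [← hy, smul_smul, ← pow_succ, hK]
  refine ⟨((w⁻¹ : Oˣ) : O) • y, ?_⟩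
  calc C = (((w⁻¹ : Oˣ) : O) * (w : O)) • C := by rw [Units.inv_mul, one_smul]
    _ = ((w⁻¹ : Oˣ) : O) • ((w : O) • C) := by rw [mul_smul]
    _ = ((w⁻¹ : Oˣ) : O) • (π • y) := by rw [hcancel]
    _ = π • (((w⁻¹ : Oˣ) : O) • y) := smul_comm _ _ _

/-- Rigidity (Proposition 3.12(b)): let `O` be the valuation ring of a discrete valuation
field of characteristic zero and residue characteristic `ℓ`, with maximal ideal `m` and
absolute ramification index `e` (so `ℓ ∈ m^e \ m^(e+1)`).  If `S` is a free `O`-module of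
finite rank and `A` is a finite-order `O`-linear automorphism of `S` with
`A - 1 ∈ m·End(S)` and `e < ℓ - 1`, then `A = 1`. -/
theorem stmt_11 (ℓ e : ℕ) (hℓ : ℓ.Prime)
    (O : Type) [CommRing O] [IsDomain O] [IsDiscreteValuationRing O] [CharZero O]
    (hres : (ℓ : O) ∈ IsLocalRing.maximalIdeal O)
    (he : (ℓ : O) ∈ (IsLocalRing.maximalIdeal O) ^ e ∧
          (ℓ : O) ∉ (IsLocalRing.maximalIdeal O) ^ (e + 1))
    (hbound : e < ℓ - 1)
    (S : Type) [AddCommGroup S] [Module O S] [Module.Free O S] [Module.Finite O S]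
    (A : S ≃ₗ[O] S) (hfin : IsOfFinOrder A)
    (hA : ((A : Module.End O S) - 1) ∈
        (IsLocalRing.maximalIdeal O) • (⊤ : Submodule O (Module.End O S))) :
    A = 1 := by
  obtain ⟨π, hπ⟩ := IsDiscreteValuationRing.exists_irreducible O
  have hmax : IsLocalRing.maximalIdeal O = Ideal.span {π} := hπ.maximalIdeal_eq
  -- extract the unit decomposition of ℓ
  obtain ⟨he1, he2⟩ := he
  rw [hmax, Ideal.span_singleton_pow, Ideal.mem_span_singleton] at he1 he2
  obtain ⟨a, ha⟩ := he1
  have haunit : IsUnit a := by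
    by_contra hau
    apply he2
    have : a ∈ IsLocalRing.maximalIdeal O := hau
    rw [hmax, Ideal.mem_span_singleton] at this
    obtain ⟨c, rfl⟩ := this
    exact ⟨c, by rw [ha]; ring⟩
  -- membership in m • ⊤ gives divisibility by π
  have hmem : ∀ x : Module.End O S,
      x ∈ (IsLocalRing.maximalIdeal O) • (⊤ : Submodule O (Module.End O S)) →
      ∃ y, x = π • y := by
    intro x hx
    have hle : (IsLocalRing.maximalIdeal O) • (⊤ : Submodule O (Module.End O S)) ≤
        LinearMap.range ((π : O) •
          (LinearMap.id : Module.End O S →ₗ[O] Module.End O S)) := by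
      refine Submodule.smul_le.mpr fun r hr xx _ => ?_
      rw [hmax, Ideal.mem_span_singleton] at hr
      obtain ⟨c, rfl⟩ := hr
      exact ⟨c • xx, by rw [LinearMap.smul_apply, LinearMap.id_apply, ← mul_smul]⟩
    obtain ⟨y, hy⟩ := hle hx
    refine ⟨y, ?_⟩
    rw [← hy, LinearMap.smul_apply, LinearMap.id_apply]
  -- the main induction on the order
  have main : ∀ M : ℕ, 0 < M → ∀ A : S ≃ₗ[O] S, A ^ M = 1 →
      (∃ y, (A : Module.End O S) - 1 = π • y) → A = 1 := by
    intro M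
    induction M using Nat.strong_induction_on with
    | _ M ih =>
      intro hM A hAM hAy
      by_cases hM1 : M = 1
      · subst hM1; simpa using hAM
      · obtain ⟨p, hp, hpd⟩ := Nat.exists_prime_and_dvd hM1
        -- powers of A stay congruent to 1 mod π
        have hpows : ∀ k : ℕ,
            ∃ y, ((A ^ k : S ≃ₗ[O] S) : Module.End O S) - 1 = π • y := by
          intro k
          induction k with
          | zero => exact ⟨0, by simp [← Module.End.one_eq_id]⟩
          | succ k ihk =>
            obtain ⟨y, hy⟩ := ihk
            obtain ⟨z, hz⟩ := hAy
            refine ⟨((A ^ k : S ≃ₗ[O] S) : Module.End O S) * z + y, ?_⟩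
            have hco : ∀ m : ℕ, ((A ^ m : S ≃ₗ[O] S) : Module.End O S)
                = ((A : Module.End O S)) ^ m := fun m =>
              map_pow (LinearEquiv.automorphismGroup.toLinearMapMonoidHom) A m
            rw [hco, hco] at *
            rw [pow_succ]
            have expand : (A : Module.End O S) ^ k * (A : Module.End O S) - 1 =
                (A : Module.End O S) ^ k * ((A : Module.End O S) - 1) +
                ((A : Module.End O S) ^ k - 1) := by noncomm_ring
            rw [expand, hy, hz, mul_smul_comm, smul_add]
        set A' : S ≃ₗ[O] S := A ^ (M / p) with hA'
        have hA'p : A' ^ p = 1 := by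
          rw [hA', ← pow_mul, Nat.div_mul_cancel hpd, hAM]
        have hco : ∀ (E : S ≃ₗ[O] S) (m : ℕ), ((E ^ m : S ≃ₗ[O] S) : Module.End O S)
            = ((E : Module.End O S)) ^ m := fun E m =>
          map_pow (LinearEquiv.automorphismGroup.toLinearMapMonoidHom) E m
        obtain ⟨y, hy⟩ := hpows (M / p)
        set B : Module.End O S := (A' : Module.End O S) - 1 with hBdef
        have hone : (1 + B) ^ p = 1 := by
          rw [hBdef]
          have : (1 : Module.End O S) + ((A' : Module.End O S) - 1)
              = (A' : Module.End O S) := by noncomm_ring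
          rw [this, ← hco, hA'p]
          rfl
        have hB0 : B = 0 := by
          by_cases hpe : p = ℓ
          · -- ramified prime case
            subst hpe
            refine aux_key hπ hp haunit.unit
              (by rw [IsUnit.unit_spec, ha, mul_comm]) (by omega) ⟨y, hy⟩ hone
          · -- p is a unit
            have hpu : IsUnit (p : O) := by
              by_contra hpu
              have hpm : (p : O) ∈ IsLocalRing.maximalIdeal O := hpu
              have hcop : Nat.Coprime p ℓ := (Nat.coprime_primes hp hℓ).mpr hpe
              have : IsCoprime (p : ℤ) (ℓ : ℤ) := Nat.isCoprime_iff_coprime.mpr hcop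
              obtain ⟨u, v, huv⟩ := this
              have h1 : (1 : O) ∈ IsLocalRing.maximalIdeal O := by
                have := congrArg (fun z : ℤ => (z : O)) huv
                push_cast at this
                rw [← this]
                exact Ideal.add_mem _ (Ideal.mul_mem_left _ _ hpm)
                  (Ideal.mul_mem_left _ _ hres)
              exact (IsLocalRing.maximalIdeal.isMaximal O).ne_top
                (Ideal.eq_top_of_isUnit_mem _ h1 isUnit_one)
            refine aux_key (d := 0) hπ hp hpu.unit
              (by rw [IsUnit.unit_spec, pow_zero, mul_one]) ?_ ⟨y, hy⟩ hone
            have := hp.two_le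
            omega
        have hA'1 : A' = 1 := by
          apply LinearEquiv.toLinearMap_injective
          have : (A' : Module.End O S) = 1 := by
            have := hB0
            rw [hBdef] at this
            linear_combination (norm := abel) this
          exact this
        have hdiv : A ^ (M / p) = 1 := hA'1
        have hlt : M / p < M := Nat.div_lt_self hM hp.one_lt
        have hpos : 0 < M / p := Nat.div_pos (Nat.le_of_dvd hM hpd) hp.pos
        obtain ⟨y', hy'⟩ := hAy
        exact ih (M / p) hlt hpos A hdiv ⟨y', hy'⟩
  exact main (orderOf A) hfin.orderOf_pos A (pow_orderOf_eq_one A) ⟨_, (hmem _ hA).choose_spec⟩
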